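/- Let G be the 3-SAT bondage construction (triangles {u_i, ū_i, v_i}, clause vertices c_j adjacent to their three literals, path s_1 s_2 s_3 with s_1, s_3 joined to all c_j). Then for every edge e of G, γ(G − e) ≤ n + 2. -/

import Mathlib

/-- A literal over `n` variables: a variable index together with a polarity
(`true` = the positive literal `uᵢ`, `false` = the negated literal `ūᵢ`). -/
abbrev Lit (n : ℕ) := Fin n × Bool

/-- Vertex type of the bondage construction: literal vertices `uᵢ, ūᵢ`,
triangle apexes `vᵢ`, clause vertices `cⱼ`, and path vertices `s₁ s₂ s₃`. -/
abbrev BVert (n m : ℕ) := Lit n ⊕ (Fin n ⊕ (Fin m ⊕ Fin 3))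

/-- The literal vertex `uᵢ` (if `b = true`) or `ūᵢ` (if `b = false`). -/
def litv {n m : ℕ} (i : Fin n) (b : Bool) : BVert n m := Sum.inl (i, b)

/-- The triangle apex vertex `vᵢ`. -/
def vv {n m : ℕ} (i : Fin n) : BVert n m := Sum.inr (Sum.inl i)

/-- The clause vertex `cⱼ`. -/
def cv {n m : ℕ} (j : Fin m) : BVert n m := Sum.inr (Sum.inr (Sum.inl j))

/-- The path vertex `s₍ₖ₊₁₎` for `k : Fin 3` (so `sv 0 = s₁`, `sv 1 = s₂`, `sv 2 = s₃`). -/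
def sv {n m : ℕ} (k : Fin 3) : BVert n m := Sum.inr (Sum.inr (Sum.inr k))

/-- Base adjacency relation of the bondage construction (symmetrized by `fromRel`):
triangle edges on `{uᵢ, ūᵢ, vᵢ}`, clause edges `cⱼxⱼ, cⱼyⱼ, cⱼzⱼ`, the path
`s₁s₂s₃`, and the edges joining `s₁` and `s₃` to every `cⱼ`. -/
def bondRel {n m : ℕ} (C : Fin m → Fin 3 → Lit n) : BVert n m → BVert n m → Prop
  | Sum.inl (i, b), Sum.inl (i', b') => i = i' ∧ b ≠ b'
  | Sum.inl (i, _), Sum.inr (Sum.inl i') => i = i'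
  | Sum.inl l, Sum.inr (Sum.inr (Sum.inl j)) => ∃ k, C j k = l
  | Sum.inr (Sum.inr (Sum.inr p)), Sum.inr (Sum.inr (Sum.inr q)) =>
      (p = 0 ∧ q = 1) ∨ (p = 1 ∧ q = 2)
  | Sum.inr (Sum.inr (Sum.inr p)), Sum.inr (Sum.inr (Sum.inl _)) => p = 0 ∨ p = 2
  | _, _ => False

/-- The graph of the bondage construction associated with a 3-SAT instance `C`. -/
def bondGraph {n m : ℕ} (C : Fin m → Fin 3 → Lit n) : SimpleGraph (BVert n m) :=
  SimpleGraph.fromRel (bondRel C)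

/-- `D` is a dominating set of `G`: every vertex not in `D` has a neighbor in `D`. -/
def IsDomSet {V : Type*} (G : SimpleGraph V) (D : Finset V) : Prop :=
  ∀ v, v ∉ D → ∃ u ∈ D, G.Adj u v

/-- The domination number of `G`: the minimum cardinality of a dominating set. -/
noncomputable def domNum {V : Type*} (G : SimpleGraph V) : ℕ :=
  sInf {k | ∃ D : Finset V, IsDomSet G D ∧ D.card = k}

/-- In the bondage construction, `γ(G − e) ≤ n + 2` for every edge `e` of `G`. -/
theorem bondGraph_domNum_deleteEdge_le {n m : ℕ} (C : Fin m → Fin 3 → Lit n) :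
    ∀ e ∈ (bondGraph C).edgeSet,
      domNum ((bondGraph C).deleteEdges {e}) ≤ n + 2 := by
  classical
  intro e _he
  set d : Fin n → BVert n m := fun i =>
    if h : ∃ b : Bool, e = s(vv i, litv i b) then litv i (!h.choose) else vv i with hd
  set D : Finset (BVert n m) :=
    (Finset.univ.image d) ∪ {sv 0, sv 2} with hD
  have hs0 : (sv 0 : BVert n m) ∈ D := by simp [hD]
  have hs2 : (sv 2 : BVert n m) ∈ D := by simp [hD]
  have hdi : ∀ i, d i ∈ D := fun i => by
    simp only [hD, Finset.mem_union, Finset.mem_image]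
    exact Or.inl ⟨i, Finset.mem_univ i, rfl⟩
  have hdom : IsDomSet ((bondGraph C).deleteEdges {e}) D := by
    intro v hv
    rcases v with ⟨i, b⟩ | i | j | k
    · -- literal vertex litv i b
      by_cases h : ∃ b' : Bool, e = s(vv i, litv i b')
      · obtain ⟨b0, hdieq, hspec⟩ :
            ∃ b0 : Bool, d i = litv i (!b0) ∧ e = s(vv i, litv i b0) :=
          ⟨h.choose, dif_pos h, h.choose_spec⟩
        by_cases hb : b = !b0
        · exact absurd (show (Sum.inl (i, b) : BVert n m) ∈ D by
            subst hb; have := hdi i; rwa [hdieq] at this) hv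
        · have hbb : b = b0 := by revert hb; cases b0 <;> cases b <;> simp
          subst hbb
          refine ⟨d i, hdi i, ?_⟩
          rw [hdieq, SimpleGraph.deleteEdges_adj]
          constructor
          · show (bondGraph C).Adj (litv i (!b)) (litv i b)
            simp [bondGraph, SimpleGraph.fromRel_adj, bondRel, litv]
          · simp only [Set.mem_singleton_iff]
            rw [hspec]
            simp [Sym2.eq_iff, litv, vv]
      · refine ⟨d i, hdi i, ?_⟩
        have hdieq : d i = vv i := dif_neg h
        rw [hdieq, SimpleGraph.deleteEdges_adj]
        constructor
        · show (bondGraph C).Adj (vv i) (litv i b)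
          simp [bondGraph, SimpleGraph.fromRel_adj, bondRel, vv, litv]
        · simp only [Set.mem_singleton_iff]
          intro hc
          exact h ⟨b, hc.symm⟩
    · -- apex vertex vv i
      by_cases h : ∃ b' : Bool, e = s(vv i, litv i b')
      · obtain ⟨b0, hdieq, hspec⟩ :
            ∃ b0 : Bool, d i = litv i (!b0) ∧ e = s(vv i, litv i b0) :=
          ⟨h.choose, dif_pos h, h.choose_spec⟩
        refine ⟨d i, hdi i, ?_⟩
        rw [hdieq, SimpleGraph.deleteEdges_adj]
        constructor
        · show (bondGraph C).Adj (litv i (!b0)) (vv i)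
          simp [bondGraph, SimpleGraph.fromRel_adj, bondRel, vv, litv]
        · simp only [Set.mem_singleton_iff]
          rw [hspec]
          simp [Sym2.eq_iff, litv, vv]
      · exact absurd (show (Sum.inr (Sum.inl i) : BVert n m) ∈ D by
          have := hdi i; rwa [show d i = vv i from dif_neg h] at this) hv
    · -- clause vertex cv j
      have hne : s(sv 0, cv j) ≠ e ∨ s(sv 2, cv j) ≠ e := by
        by_contra hc
        push_neg at hc
        have := hc.1.trans hc.2.symm
        simp [Sym2.eq_iff, sv, cv] at this
      rcases hne with hne | hne
      · refine ⟨sv 0, hs0, ?_⟩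
        rw [SimpleGraph.deleteEdges_adj]
        refine ⟨?_, by simpa [cv] using hne⟩
        show (bondGraph C).Adj (sv 0) (cv j)
        simp [bondGraph, SimpleGraph.fromRel_adj, bondRel, sv, cv]
      · refine ⟨sv 2, hs2, ?_⟩
        rw [SimpleGraph.deleteEdges_adj]
        refine ⟨?_, by simpa [cv] using hne⟩
        show (bondGraph C).Adj (sv 2) (cv j)
        simp [bondGraph, SimpleGraph.fromRel_adj, bondRel, sv, cv]
    · -- path vertex sv k
      have hk : k = 0 ∨ k = 1 ∨ k = 2 := by omega
      rcases hk with rfl | rfl | rfl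
      · exact absurd hs0 hv
      · have hne : s((sv 0 : BVert n m), sv 1) ≠ e ∨ s((sv 2 : BVert n m), sv 1) ≠ e := by
          by_contra hc
          push_neg at hc
          have := hc.1.trans hc.2.symm
          simp [Sym2.eq_iff, sv] at this
        rcases hne with hne | hne
        · refine ⟨sv 0, hs0, ?_⟩
          rw [SimpleGraph.deleteEdges_adj]
          refine ⟨?_, by simpa [sv] using hne⟩
          show (bondGraph C).Adj (sv 0 : BVert n m) (sv 1)
          simp [bondGraph, SimpleGraph.fromRel_adj, bondRel, sv]
        · refine ⟨sv 2, hs2, ?_⟩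
          rw [SimpleGraph.deleteEdges_adj]
          refine ⟨?_, by simpa [sv] using hne⟩
          show (bondGraph C).Adj (sv 2 : BVert n m) (sv 1)
          simp [bondGraph, SimpleGraph.fromRel_adj, bondRel, sv]
      · exact absurd hs2 hv
  have hcard : D.card ≤ n + 2 := by
    calc D.card ≤ (Finset.univ.image d).card + ({sv 0, sv 2} : Finset (BVert n m)).card :=
          Finset.card_union_le _ _
      _ ≤ n + 2 := by
          gcongr
          · calc (Finset.univ.image d).card ≤ (Finset.univ : Finset (Fin n)).card :=
                Finset.card_image_le
              _ = n := by simp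
          · exact (Finset.card_insert_le _ _).trans (by simp)
  calc domNum ((bondGraph C).deleteEdges {e}) ≤ D.card :=
        Nat.sInf_le ⟨D, hdom, rfl⟩
    _ ≤ n + 2 := hcard
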